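/- Let a > 0 and b > 0 be real numbers and set c = a²/b. Define smooth functions on ℝ³ by X¹(x) = b·x₂ + a·x₃, Y(x) = 4a(bx₂ + ax₃)² + (a² + b²)/a, X²(x) = (1/(8b))[e^{−2ax₁}·Y(x) + e^{2ax₁}(a² − 3b²)/a + 2(b² − a²)/a], X³(x) = (1/(8a))[e^{−2ax₁}·Y(x) + e^{2ax₁}(b² − 3a²)/a + 2(a² − b²)/a], and first-order differential operators L₁ f = ∂f/∂x₁, L₂ f = ((1 + e^{2ax₁})/2)·∂f/∂x₂ + (b/a)((e^{2ax₁} − 1)/2)·∂f/∂x₃, L₃ f = (a/b)((e^{2ax₁} − 1)/2)·∂f/∂x₂ + ((1 + e^{2ax₁})/2)·∂f/∂x₃. Define the matrix of functions C by C₁₂ = C₂₁ = a·X² + c·X³, C₁₃ = C₃₁ = b·X² + a·X³, C₂₂ = C₃₃ = −2a·X¹, C₂₃ = C₃₂ = −(b + c)·X¹, and C₁₁ = 0. Then for all j, k ∈ {1,2,3} and all x ∈ ℝ³: L_j(X^k)(x) + L_k(X^j)(x) + C_{jk}(x) = 0. (This is the Killing field equation, in the left-invariant orthonormal frame, for the vector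 field X on the group with triple (a,b,a²/b), corresponding to the Lie algebra 𝔤(1).) -/

import Mathlib

/-- Partial derivative in the first coordinate of `ℝ³ = ℝ × ℝ × ℝ`. -/
noncomputable def pd1 (f : ℝ × ℝ × ℝ → ℝ) (x : ℝ × ℝ × ℝ) : ℝ := fderiv ℝ f x (1, 0, 0)

/-- Partial derivative in the second coordinate. -/
noncomputable def pd2 (f : ℝ × ℝ × ℝ → ℝ) (x : ℝ × ℝ × ℝ) : ℝ := fderiv ℝ f x (0, 1, 0)

/-- Partial derivative in the third coordinate. -/
noncomputable def pd3 (f : ℝ × ℝ × ℝ → ℝ) (x : ℝ × ℝ × ℝ) : ℝ := fderiv ℝ f x (0, 0, 1)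

/-- The auxiliary function `Y = 4a(bx₂ + ax₃)² + (a² + b²)/a`. -/
noncomputable def Yaux (a b : ℝ) (x : ℝ × ℝ × ℝ) : ℝ :=
  4 * a * (b * x.2.1 + a * x.2.2) ^ 2 + (a ^ 2 + b ^ 2) / a

/-- The components of the vector field:
`X¹ = b x₂ + a x₃`,
`X² = (1/(8b))[e^{−2ax₁} Y + e^{2ax₁}(a² − 3b²)/a + 2(b² − a²)/a]`,
`X³ = (1/(8a))[e^{−2ax₁} Y + e^{2ax₁}(b² − 3a²)/a + 2(a² − b²)/a]`. -/
noncomputable def Xcomp (a b : ℝ) : Fin 3 → ℝ × ℝ × ℝ → ℝ :=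
  ![fun x => b * x.2.1 + a * x.2.2,
    fun x => 1 / (8 * b) *
      (Real.exp (-(2 * a * x.1)) * Yaux a b x +
        Real.exp (2 * a * x.1) * (a ^ 2 - 3 * b ^ 2) / a + 2 * (b ^ 2 - a ^ 2) / a),
    fun x => 1 / (8 * a) *
      (Real.exp (-(2 * a * x.1)) * Yaux a b x +
        Real.exp (2 * a * x.1) * (b ^ 2 - 3 * a ^ 2) / a + 2 * (a ^ 2 - b ^ 2) / a)]

lemma hP1 (x : ℝ × ℝ × ℝ) : HasFDerivAt (fun y : ℝ × ℝ × ℝ => y.1)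
    (ContinuousLinearMap.fst ℝ ℝ (ℝ × ℝ)) x := hasFDerivAt_fst
lemma hP2 (x : ℝ × ℝ × ℝ) : HasFDerivAt (fun y : ℝ × ℝ × ℝ => y.2.1)
    ((ContinuousLinearMap.fst ℝ ℝ ℝ).comp (ContinuousLinearMap.snd ℝ ℝ (ℝ × ℝ))) x :=
  hasFDerivAt_fst.comp x hasFDerivAt_snd
lemma hP3 (x : ℝ × ℝ × ℝ) : HasFDerivAt (fun y : ℝ × ℝ × ℝ => y.2.2)
    ((ContinuousLinearMap.snd ℝ ℝ ℝ).comp (ContinuousLinearMap.snd ℝ ℝ (ℝ × ℝ))) x :=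
  hasFDerivAt_snd.comp x hasFDerivAt_snd

lemma pdX0 (a b : ℝ) (x : ℝ × ℝ × ℝ) :
    pd1 (Xcomp a b 0) x = 0 ∧ pd2 (Xcomp a b 0) x = b ∧ pd3 (Xcomp a b 0) x = a := by
  have heq : Xcomp a b 0 = fun y : ℝ × ℝ × ℝ => b * y.2.1 + a * y.2.2 := by
    funext y; simp [Xcomp]
  have hD := ((hP2 x).const_mul b).add ((hP3 x).const_mul a)
  refine ⟨?_, ?_, ?_⟩
  · rw [pd1, heq]; erw [hD.fderiv]; simp
  · rw [pd2, heq]; erw [hD.fderiv]; simp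
  · rw [pd3, heq]; erw [hD.fderiv]; simp

lemma pdX1 (a b : ℝ) (ha : a ≠ 0) (hb : b ≠ 0) (x : ℝ × ℝ × ℝ) :
    pd1 (Xcomp a b 1) x = 1 / (8 * b) * (2 * a) *
        (Real.exp (2 * a * x.1) * (a ^ 2 - 3 * b ^ 2) / a -
          Real.exp (-(2 * a * x.1)) * Yaux a b x) ∧
    pd2 (Xcomp a b 1) x = Real.exp (-(2 * a * x.1)) * a * (b * x.2.1 + a * x.2.2) ∧
    pd3 (Xcomp a b 1) x = Real.exp (-(2 * a * x.1)) * (a ^ 2 / b) * (b * x.2.1 + a * x.2.2) := by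
  have heq : Xcomp a b 1 = fun y : ℝ × ℝ × ℝ =>
      1 / (8 * b) * (Real.exp (-(2 * a * y.1)) *
        (4 * a * ((b * y.2.1 + a * y.2.2) * (b * y.2.1 + a * y.2.2)) + (a ^ 2 + b ^ 2) / a) +
        Real.exp (2 * a * y.1) * ((a ^ 2 - 3 * b ^ 2) / a) + 2 * (b ^ 2 - a ^ 2) / a) := by
    funext y
    simp only [Xcomp, Yaux, Matrix.cons_val_one, Matrix.cons_val_zero, Matrix.head_cons]
    ring
  have hs := ((hP2 x).const_mul b).add ((hP3 x).const_mul a)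
  have hQ := ((hs.mul hs).const_mul (4 * a)).add_const ((a ^ 2 + b ^ 2) / a)
  have hG := (((hP1 x).const_mul (2 * a)).neg).exp
  have hF := ((hP1 x).const_mul (2 * a)).exp
  have hD := ((((hG.mul hQ).add (hF.mul_const ((a ^ 2 - 3 * b ^ 2) / a))).add_const
      (2 * (b ^ 2 - a ^ 2) / a)).const_mul (1 / (8 * b)))
  refine ⟨?_, ?_, ?_⟩
  · rw [pd1, heq]; erw [hD.fderiv]; simp [Yaux]; field_simp; ring
  · rw [pd2, heq]; erw [hD.fderiv]; simp [Yaux]; field_simp; ring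
  · rw [pd3, heq]; erw [hD.fderiv]; simp [Yaux]; field_simp; ring

lemma pdX2 (a b : ℝ) (ha : a ≠ 0) (hb : b ≠ 0) (x : ℝ × ℝ × ℝ) :
    pd1 (Xcomp a b 2) x = 1 / (8 * a) * (2 * a) *
        (Real.exp (2 * a * x.1) * (b ^ 2 - 3 * a ^ 2) / a -
          Real.exp (-(2 * a * x.1)) * Yaux a b x) ∧
    pd2 (Xcomp a b 2) x = Real.exp (-(2 * a * x.1)) * b * (b * x.2.1 + a * x.2.2) ∧
    pd3 (Xcomp a b 2) x = Real.exp (-(2 * a * x.1)) * a * (b * x.2.1 + a * x.2.2) := by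
  have heq : Xcomp a b 2 = fun y : ℝ × ℝ × ℝ =>
      1 / (8 * a) * (Real.exp (-(2 * a * y.1)) *
        (4 * a * ((b * y.2.1 + a * y.2.2) * (b * y.2.1 + a * y.2.2)) + (a ^ 2 + b ^ 2) / a) +
        Real.exp (2 * a * y.1) * ((b ^ 2 - 3 * a ^ 2) / a) + 2 * (a ^ 2 - b ^ 2) / a) := by
    funext y
    simp only [Xcomp, Yaux, Matrix.cons_val_two, Matrix.tail_cons, Matrix.head_cons]
    ring
  have hs := ((hP2 x).const_mul b).add ((hP3 x).const_mul a)
  have hQ := ((hs.mul hs).const_mul (4 * a)).add_const ((a ^ 2 + b ^ 2) / a)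
  have hG := (((hP1 x).const_mul (2 * a)).neg).exp
  have hF := ((hP1 x).const_mul (2 * a)).exp
  have hD := ((((hG.mul hQ).add (hF.mul_const ((b ^ 2 - 3 * a ^ 2) / a))).add_const
      (2 * (a ^ 2 - b ^ 2) / a)).const_mul (1 / (8 * a)))
  refine ⟨?_, ?_, ?_⟩
  · rw [pd1, heq]; erw [hD.fderiv]; simp [Yaux]; field_simp; ring
  · rw [pd2, heq]; erw [hD.fderiv]; simp [Yaux]; field_simp; ring
  · rw [pd3, heq]; erw [hD.fderiv]; simp [Yaux]; field_simp; ring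

/-- The left-invariant frame operators `L₁ = ∂₁`,
`L₂ = ((1 + e^{2ax₁})/2) ∂₂ + (b/a)((e^{2ax₁} − 1)/2) ∂₃`,
`L₃ = (a/b)((e^{2ax₁} − 1)/2) ∂₂ + ((1 + e^{2ax₁})/2) ∂₃` for the case `(a, b, a²/b)`. -/
noncomputable def Lop (a b : ℝ) : Fin 3 → (ℝ × ℝ × ℝ → ℝ) → ℝ × ℝ × ℝ → ℝ :=
  ![fun f x => pd1 f x,
    fun f x => (1 + Real.exp (2 * a * x.1)) / 2 * pd2 f x +
      b / a * ((Real.exp (2 * a * x.1) - 1) / 2) * pd3 f x,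
    fun f x => a / b * ((Real.exp (2 * a * x.1) - 1) / 2) * pd2 f x +
      (1 + Real.exp (2 * a * x.1)) / 2 * pd3 f x]

/-- The correction matrix `C` for `c = a²/b`: `C₁₂ = C₂₁ = a X² + c X³`,
`C₁₃ = C₃₁ = b X² + a X³`, `C₂₂ = C₃₃ = −2a X¹`, `C₂₃ = C₃₂ = −(b + c) X¹`, `C₁₁ = 0`. -/
noncomputable def Cmat (a b : ℝ) : Fin 3 → Fin 3 → ℝ × ℝ × ℝ → ℝ :=
  ![![fun _ => 0,
      fun x => a * Xcomp a b 1 x + a ^ 2 / b * Xcomp a b 2 x,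
      fun x => b * Xcomp a b 1 x + a * Xcomp a b 2 x],
    ![fun x => a * Xcomp a b 1 x + a ^ 2 / b * Xcomp a b 2 x,
      fun x => -2 * a * Xcomp a b 0 x,
      fun x => -(b + a ^ 2 / b) * Xcomp a b 0 x],
    ![fun x => b * Xcomp a b 1 x + a * Xcomp a b 2 x,
      fun x => -(b + a ^ 2 / b) * Xcomp a b 0 x,
      fun x => -2 * a * Xcomp a b 0 x]]

set_option maxHeartbeats 1000000 in
/-- The Killing field equation for the vector field `X` on the group with triple
`(a, b, a²/b)`, corresponding to the Lie algebra `𝔤(1)`. -/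
theorem g1_killing (a b : ℝ) (ha : 0 < a) (hb : 0 < b) :
    ∀ (j k : Fin 3) (x : ℝ × ℝ × ℝ),
      Lop a b j (Xcomp a b k) x + Lop a b k (Xcomp a b j) x + Cmat a b j k x = 0 := by
  intro j k x
  obtain ⟨h01, h02, h03⟩ := pdX0 a b x
  obtain ⟨h11, h12, h13⟩ := pdX1 a b ha.ne' hb.ne' x
  obtain ⟨h21, h22, h23⟩ := pdX2 a b ha.ne' hb.ne' x
  have hE := Real.exp_ne_zero (2 * a * x.1)
  fin_cases j <;> fin_cases k <;>
    simp only [Fin.zero_eta, Fin.mk_one, show (⟨2, by omega⟩ : Fin 3) = 2 from rfl, Fin.isValue,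
      Lop, Cmat, Matrix.cons_val_zero, Matrix.cons_val_one, Matrix.head_cons,
      Matrix.cons_val_two, Matrix.tail_cons, h01, h02, h03, h11, h12, h13, h21, h22, h23] <;>
    first
      | (simp only [Xcomp, Yaux, Matrix.cons_val_zero, Matrix.cons_val_one, Matrix.head_cons,
           Matrix.cons_val_two, Matrix.tail_cons, Real.exp_neg]
         field_simp
         ring)
      | norm_num
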